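/- A continuous distribution on [0,∞) with CDF F and density f is regular (i.e., the virtual value φ(x) = x - (1-F(x))/f(x) is non-decreasing) if and only if the function h_r(x) = 1/(1 - F(x)) is convex on the support where F(x) < 1. -/

import Mathlib

open Filter Topology Set

lemma monotoneOn_deriv_nonneg_at {u : ℝ → ℝ} {s : Set ℝ} {x u' : ℝ}
    (hm : MonotoneOn u s) (hx : x ∈ interior s) (hd : HasDerivAt u u' x) : 0 ≤ u' := by
  have hxs : x ∈ s := interior_subset hx
  have hslope : Tendsto (slope u x) (𝓝[≠] x) (𝓝 u') :=
    hasDerivAt_iff_tendsto_slope.1 hd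
  have hle : 𝓝[>] x ≤ 𝓝[≠] x := nhdsWithin_mono x fun y hy => ne_of_gt hy
  have hslope' : Tendsto (slope u x) (𝓝[>] x) (𝓝 u') := hslope.mono_left hle
  have hev : ∀ᶠ y in 𝓝[>] x, 0 ≤ slope u x y := by
    have hs : s ∈ 𝓝 x := mem_interior_iff_mem_nhds.1 hx
    filter_upwards [nhdsWithin_le_nhds hs, self_mem_nhdsWithin] with y hy hy'
    have : u x ≤ u y := hm hxs hy (le_of_lt hy')
    have hpos : 0 < y - x := sub_pos.2 hy'
    rw [slope_def_field]
    exact div_nonneg (sub_nonneg.2 this) hpos.le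
  exact ge_of_tendsto hslope' hev



/-- A continuous distribution with CDF F and density f is regular
(virtual value φ(x) = x - (1-F(x))/f(x) non-decreasing) iff h_r(x) = 1/(1-F(x)) is
convex on the support where F(x) < 1. -/
theorem regular_iff_link_convex
    (F f : ℝ → ℝ)
    (hF01 : ∀ x, 0 ≤ F x ∧ F x ≤ 1)
    (hF0 : F 0 = 0)
    (hFmono : MonotoneOn F (Set.Ici 0))
    (S : Set ℝ) (hS : S = {x | 0 ≤ x ∧ F x < 1})
    (hderiv : ∀ x ∈ S, HasDerivAt F (f x) x)
    (hfpos : ∀ x ∈ S, 0 < f x)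
    (hC2 : ∀ x ∈ S, ∃ f' : ℝ, HasDerivAt f f' x) :
    MonotoneOn (fun x => x - (1 - F x) / f x) S ↔
      ConvexOn ℝ S (fun x => 1 / (1 - F x)) := by
  -- basic facts
  have hne : ∀ x ∈ S, 0 < 1 - F x := by
    intro x hx; rw [hS] at hx; linarith [hx.2]
  have hconv : Convex ℝ S := by
    rw [convex_iff_ordConnected]
    constructor
    intro x hx y hy z hz
    rw [hS] at hx hy ⊢
    refine ⟨hx.1.trans hz.1, lt_of_le_of_lt ?_ hy.2⟩
    exact hFmono (mem_Ici.2 (hx.1.trans hz.1)) (mem_Ici.2 hy.1) hz.2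
  -- derivative of f
  have hfd : ∀ x ∈ S, HasDerivAt f (deriv f x) x := by
    intro x hx
    obtain ⟨c, hc⟩ := hC2 x hx
    exact hc.deriv ▸ hc
  set K : ℝ → ℝ := fun x => 2 * f x ^ 2 + (1 - F x) * deriv f x with hK
  -- derivative of φ
  have hφd : ∀ x ∈ S, HasDerivAt (fun x => x - (1 - F x) / f x) (K x / f x ^ 2) x := by
    intro x hx
    have h1 : HasDerivAt (fun y => 1 - F y) (-f x) x := (hderiv x hx).const_sub 1
    have h2 := (h1.div (hfd x hx) (hfpos x hx).ne')
    have h3 := (hasDerivAt_id x).sub h2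
    refine h3.congr_deriv ?_
    have hf0 := (hfpos x hx).ne'
    field_simp
    ring
  -- derivative of h = 1/(1-F)
  have hhd : ∀ x ∈ S, HasDerivAt (fun x => 1 / (1 - F x)) (f x / (1 - F x) ^ 2) x := by
    intro x hx
    have h1 : HasDerivAt (fun y => 1 - F y) (-f x) x := (hderiv x hx).const_sub 1
    have h2 := h1.inv (hne x hx).ne'
    simp only [one_div]
    refine h2.congr_deriv ?_
    rw [neg_neg]
  set g : ℝ → ℝ := fun x => f x / (1 - F x) ^ 2 with hg
  -- derivative of g
  have hgd : ∀ x ∈ S, HasDerivAt g (K x / (1 - F x) ^ 3) x := by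
    intro x hx
    have h1 : HasDerivAt (fun y => 1 - F y) (-f x) x := (hderiv x hx).const_sub 1
    have hden : HasDerivAt (fun y => (1 - F y) ^ 2) (2 * (1 - F x) ^ 1 * (-f x)) x := by
      simpa using h1.fun_pow 2
    have hne2 : (1 - F x) ^ 2 ≠ 0 := pow_ne_zero 2 (hne x hx).ne'
    have h2 := (hfd x hx).div hden hne2
    refine h2.congr_deriv ?_
    have h0 := (hne x hx).ne'
    field_simp
    ring
  constructor
  · -- regular → convex
    intro hmono
    have hKnn : ∀ x ∈ interior S, 0 ≤ K x := by
      intro x hx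
      have hxS : x ∈ S := interior_subset hx
      have h0 : 0 ≤ K x / f x ^ 2 := monotoneOn_deriv_nonneg_at hmono hx (hφd x hxS)
      have hf2 : (0:ℝ) < f x ^ 2 := pow_pos (hfpos x hxS) 2
      calc K x = K x / f x ^ 2 * f x ^ 2 := (div_mul_cancel₀ _ hf2.ne').symm
      _ ≥ 0 := mul_nonneg h0 hf2.le
    have hgmono : MonotoneOn g (interior S) := by
      apply monotoneOn_of_deriv_nonneg hconv.interior
      · intro x hx
        exact (hgd x (interior_subset hx)).continuousAt.continuousWithinAt
      · rw [interior_interior]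
        intro x hx
        exact (hgd x (interior_subset hx)).differentiableAt.differentiableWithinAt
      · rw [interior_interior]
        intro x hx
        rw [(hgd x (interior_subset hx)).deriv]
        have h3 : (0:ℝ) < (1 - F x) ^ 3 := pow_pos (hne x (interior_subset hx)) 3
        exact div_nonneg (hKnn x hx) h3.le
    apply MonotoneOn.convexOn_of_deriv hconv
    · intro x hx
      exact (hhd x hx).continuousAt.continuousWithinAt
    · intro x hx
      exact (hhd x (interior_subset hx)).differentiableAt.differentiableWithinAt
    · intro x hx y hy hxy
      rw [(hhd x (interior_subset hx)).deriv, (hhd y (interior_subset hy)).deriv]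
      exact hgmono hx hy hxy
  · -- convex → regular
    intro hcvx
    have hgmono : MonotoneOn g S := by
      have := hcvx.monotoneOn_deriv (fun x hx => (hhd x hx).differentiableAt)
      intro x hx y hy hxy
      have := this hx hy hxy
      rwa [(hhd x hx).deriv, (hhd y hy).deriv] at this
    have hKnn : ∀ x ∈ interior S, 0 ≤ K x := by
      intro x hx
      have hxS : x ∈ S := interior_subset hx
      have h0 : 0 ≤ K x / (1 - F x) ^ 3 := monotoneOn_deriv_nonneg_at hgmono hx (hgd x hxS)
      have h3 : (0:ℝ) < (1 - F x) ^ 3 := pow_pos (hne x hxS) 3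
      calc K x = K x / (1 - F x) ^ 3 * (1 - F x) ^ 3 := (div_mul_cancel₀ _ h3.ne').symm
      _ ≥ 0 := mul_nonneg h0 h3.le
    apply monotoneOn_of_deriv_nonneg hconv
    · intro x hx
      exact (hφd x hx).continuousAt.continuousWithinAt
    · intro x hx
      exact (hφd x (interior_subset hx)).differentiableAt.differentiableWithinAt
    · intro x hx
      rw [(hφd x (interior_subset hx)).deriv]
      have hf2 : (0:ℝ) < f x ^ 2 := pow_pos (hfpos x (interior_subset hx)) 2
      exact div_nonneg (hKnn x hx) hf2.le
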